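/- Let the data (a_1,…,a_n) with labels (y_1,…,y_n) be separable with margin μ > 0, and let R := max_{i∈[n]} ‖a_i‖. Fix any step size γ > 0 and consider the Normalized LR+GD iterates θ₀ = 0, θ_{t+1} = θ_t − γ β(θ_t) ∇f(θ_t). Then there exists t with 0 ≤ t ≤ R²/μ² + 2 log(2n − 1)/(γ μ²) such that y_i a_iᵀθ_t > 0 for all i ∈ [n]; i.e., Normalized LR+GD solves the classification task after at most R²/μ² + 2 log(2n − 1)/(γ μ²) iterations. -/

import Mathlib

open scoped RealInnerProductSpace BigOperators

lemma lrgd_key_ineq {n : ℕ} (hn : 0 < n) (z : Fin n → ℝ) (j : Fin n) (hj : z j ≤ 0) :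
    (∑ i, (1 + Real.exp (z i))⁻¹ * z i) ≤
      (∑ i, (1 + Real.exp (z i))⁻¹) * Real.log (2 * n - 1) := by
  set s : Fin n → ℝ := fun i => (1 + Real.exp (z i))⁻¹ with hs
  have hspos : ∀ i, 0 < s i := fun i => by positivity
  have hslt : ∀ i, s i < 1 := by
    intro i
    have h1 : (1:ℝ) < 1 + Real.exp (z i) := by have := Real.exp_pos (z i); linarith
    have := inv_lt_one_of_one_lt₀ h1
    simpa [hs] using this
  set S : ℝ := ∑ i, s i with hS
  have hSpos : 0 < S := Finset.sum_pos (fun i _ => hspos i) ⟨j, Finset.mem_univ j⟩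
  have hShalf : (1:ℝ)/2 ≤ S := by
    have hsj : (1:ℝ)/2 ≤ s j := by
      have he : Real.exp (z j) ≤ 1 := Real.exp_le_one_iff.2 hj
      have h2 : (0:ℝ) < 1 + Real.exp (z j) := by positivity
      have h3 : 1 + Real.exp (z j) ≤ 2 := by linarith
      calc (1:ℝ)/2 = 2⁻¹ := by norm_num
        _ ≤ (1 + Real.exp (z j))⁻¹ := inv_anti₀ h2 h3
        _ = s j := rfl
    calc (1:ℝ)/2 ≤ s j := hsj
      _ ≤ S := Finset.single_le_sum (fun i _ => (hspos i).le) (Finset.mem_univ j)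
  have hSltn : S < n := by
    calc S < ∑ _i : Fin n, (1:ℝ) := Finset.sum_lt_sum_of_nonempty ⟨j, Finset.mem_univ j⟩
            (fun i _ => hslt i)
      _ = n := by simp
  -- Jensen
  have hjensen := strictConcaveOn_log_Ioi.concaveOn.le_map_sum
    (t := Finset.univ) (w := fun i => s i / S) (p := fun i => Real.exp (z i))
    (fun i _ => by positivity)
    (by rw [← Finset.sum_div]; field_simp; exact hS.symm)
    (fun i _ => Set.mem_Ioi.2 (Real.exp_pos _))
  have hse : ∀ i, s i * Real.exp (z i) = 1 - s i := by
    intro i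
    have h2 : (0:ℝ) < 1 + Real.exp (z i) := by positivity
    rw [hs]
    field_simp
    ring
  have hsum2 : ∑ i, (s i / S) • Real.exp (z i) = (n - S) / S := by
    simp only [smul_eq_mul, div_mul_eq_mul_div]
    rw [← Finset.sum_div]
    congr 1
    calc ∑ i, s i * Real.exp (z i) = ∑ i, (1 - s i) := by simp_rw [hse]
      _ = n - S := by rw [Finset.sum_sub_distrib]; simp [hS]
  rw [hsum2] at hjensen
  have hlhs : ∑ i, (s i / S) • Real.log (Real.exp (z i)) = (∑ i, s i * z i) / S := by
    simp_rw [Real.log_exp, smul_eq_mul, div_mul_eq_mul_div, ← Finset.sum_div]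
  rw [hlhs] at hjensen
  have hlog : Real.log ((n - S) / S) ≤ Real.log (2 * n - 1) := by
    apply Real.log_le_log (div_pos (by linarith) hSpos)
    rw [div_le_iff₀ hSpos]
    nlinarith [hShalf, hSltn, (hn : 0 < n)]
  have : (∑ i, s i * z i) / S ≤ Real.log (2 * n - 1) := hjensen.trans hlog
  calc ∑ i, s i * z i = ((∑ i, s i * z i) / S) * S := by field_simp
    _ ≤ Real.log (2 * n - 1) * S := by
        apply mul_le_mul_of_nonneg_right this hSpos.le
    _ = S * Real.log (2 * n - 1) := mul_comm _ _


/-- The gradient of the logistic loss `f(θ) = (1/n) Σ_i log(1 + exp(-y_i aᵢᵀθ))`. -/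
noncomputable def logisticGrad {d n : ℕ} (a : Fin n → EuclideanSpace ℝ (Fin d))
    (y : Fin n → ℝ) (θ : EuclideanSpace ℝ (Fin d)) : EuclideanSpace ℝ (Fin d) :=
  -(((1 : ℝ) / n) • ∑ i, ((1 + Real.exp (y i * ⟪a i, θ⟫))⁻¹ * y i) • a i)

/-- The normalization factor `β(θ) = ((1/n) Σ_i (1 + exp(y_i aᵢᵀθ))⁻¹)⁻¹`. -/
noncomputable def logisticBeta {d n : ℕ} (a : Fin n → EuclideanSpace ℝ (Fin d))
    (y : Fin n → ℝ) (θ : EuclideanSpace ℝ (Fin d)) : ℝ :=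
  (((1 : ℝ) / n) * ∑ i, (1 + Real.exp (y i * ⟪a i, θ⟫))⁻¹)⁻¹

/-- **Normalized LR+GD convergence.** For any step size `γ > 0`, the Normalized LR+GD
iterates `θ_{t+1} = θ_t − γ β(θ_t) ∇f(θ_t)` started from `0` solve the classification task
after at most `R²/μ² + 2 log(2n − 1)/(γ μ²)` iterations. -/
theorem normalized_lr_gd_converges {d n : ℕ} (hn : 0 < n)
    (a : Fin n → EuclideanSpace ℝ (Fin d)) (y : Fin n → ℝ)
    (hy : ∀ i, y i = 1 ∨ y i = -1)
    (μ R : ℝ) (hμ : 0 < μ)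
    (θstar : EuclideanSpace ℝ (Fin d)) (hstar : ‖θstar‖ = 1)
    (hmargin : ∀ i, μ ≤ y i * ⟪a i, θstar⟫)
    (hR : IsGreatest (Set.range fun i => ‖a i‖) R)
    (γ : ℝ) (hγ : 0 < γ)
    (θ : ℕ → EuclideanSpace ℝ (Fin d))
    (h0 : θ 0 = 0)
    (hstep : ∀ t, θ (t + 1) = θ t - (γ * logisticBeta a y (θ t)) • logisticGrad a y (θ t)) :
    ∃ t : ℕ, (t : ℝ) ≤ R ^ 2 / μ ^ 2 + 2 * Real.log (2 * n - 1) / (γ * μ ^ 2) ∧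
      ∀ i, 0 < y i * ⟪a i, θ t⟫ := by
  have hyabs : ∀ i, |y i| = 1 := by
    intro i; rcases hy i with h | h <;> simp [h]
  have hRnn : 0 ≤ R := by
    obtain ⟨i0, hi0⟩ := hR.1
    rw [← hi0]; exact norm_nonneg _
  have hRa : ∀ i, ‖a i‖ ≤ R := fun i => hR.2 ⟨i, rfl⟩
  set L : ℝ := Real.log (2 * n - 1) with hLdef
  have hn1 : (1:ℝ) ≤ (n:ℝ) := by exact_mod_cast hn
  have hL0 : 0 ≤ L := Real.log_nonneg (by linarith)
  set sf : EuclideanSpace ℝ (Fin d) → Fin n → ℝ :=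
    fun θ' i => (1 + Real.exp (y i * ⟪a i, θ'⟫))⁻¹ with hsf
  set Sf : EuclideanSpace ℝ (Fin d) → ℝ := fun θ' => ∑ i, sf θ' i with hSf
  set w : EuclideanSpace ℝ (Fin d) → EuclideanSpace ℝ (Fin d) :=
    fun θ' => (Sf θ')⁻¹ • ∑ i, (sf θ' i * y i) • a i with hw
  have hsfpos : ∀ θ' i, 0 < sf θ' i := fun θ' i => by positivity
  have hSfpos : ∀ θ', 0 < Sf θ' := fun θ' =>
    Finset.sum_pos (fun i _ => hsfpos θ' i) ⟨⟨0, hn⟩, Finset.mem_univ _⟩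
  have hnne : (n:ℝ) ≠ 0 := by positivity
  -- step rewriting
  have hstep' : ∀ t, θ (t + 1) = θ t + γ • w (θ t) := by
    intro t
    have hSne : Sf (θ t) ≠ 0 := (hSfpos _).ne'
    rw [hstep t, logisticGrad, logisticBeta]
    have e1 : (∑ i, ((1 + Real.exp (y i * ⟪a i, θ t⟫))⁻¹ * y i) • a i)
        = ∑ i, (sf (θ t) i * y i) • a i := rfl
    have e2 : (∑ i, (1 + Real.exp (y i * ⟪a i, θ t⟫))⁻¹) = Sf (θ t) := rfl
    rw [e1, e2]
    simp only [hw, smul_neg, sub_neg_eq_add, smul_smul]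
    congr 2
    field_simp
  -- (A) margin growth
  have hA : ∀ θ', μ ≤ ⟪w θ', θstar⟫ := by
    intro θ'
    have hinner : ⟪w θ', θstar⟫ = (Sf θ')⁻¹ * ∑ i, sf θ' i * (y i * ⟪a i, θstar⟫) := by
      simp only [hw]
      rw [real_inner_smul_left, sum_inner]
      congr 1
      refine Finset.sum_congr rfl fun i _ => ?_
      rw [real_inner_smul_left]; ring
    rw [hinner]
    have hlow : Sf θ' * μ ≤ ∑ i, sf θ' i * (y i * ⟪a i, θstar⟫) := by
      rw [hSf, Finset.sum_mul]
      exact Finset.sum_le_sum fun i _ =>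
        mul_le_mul_of_nonneg_left (hmargin i) (hsfpos θ' i).le
    have hS := hSfpos θ'
    calc μ = (Sf θ')⁻¹ * (Sf θ' * μ) := by rw [inv_mul_cancel_left₀ hS.ne']
      _ ≤ (Sf θ')⁻¹ * ∑ i, sf θ' i * (y i * ⟪a i, θstar⟫) :=
        mul_le_mul_of_nonneg_left hlow (inv_pos.2 hS).le
  -- (B) norm bound
  have hB : ∀ θ', ‖w θ'‖ ≤ R := by
    intro θ'
    have hS := hSfpos θ'
    have h1 : ‖∑ i, (sf θ' i * y i) • a i‖ ≤ Sf θ' * R := by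
      calc ‖∑ i, (sf θ' i * y i) • a i‖ ≤ ∑ i, ‖(sf θ' i * y i) • a i‖ :=
            norm_sum_le _ _
        _ ≤ ∑ i, sf θ' i * R := by
            refine Finset.sum_le_sum fun i _ => ?_
            rw [norm_smul]
            have : ‖sf θ' i * y i‖ = sf θ' i := by
              rw [Real.norm_eq_abs, abs_mul, hyabs i,
                abs_of_pos (hsfpos θ' i)]; ring
            rw [this]
            exact mul_le_mul_of_nonneg_left (hRa i) (hsfpos θ' i).le
        _ = Sf θ' * R := by rw [hSf, Finset.sum_mul]
    simp only [hw]
    rw [norm_smul, Real.norm_eq_abs, abs_of_pos (inv_pos.2 hS)]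
    calc (Sf θ')⁻¹ * ‖∑ i, (sf θ' i * y i) • a i‖ ≤ (Sf θ')⁻¹ * (Sf θ' * R) :=
          mul_le_mul_of_nonneg_left h1 (inv_pos.2 hS).le
      _ = R := by rw [inv_mul_cancel_left₀ hS.ne']
  -- (C) key inequality when misclassified
  have hC : ∀ θ', (∃ j, y j * ⟪a j, θ'⟫ ≤ 0) → ⟪θ', w θ'⟫ ≤ L := by
    intro θ' ⟨j, hj⟩
    have hS := hSfpos θ'
    have hinner : ⟪θ', w θ'⟫ = (Sf θ')⁻¹ * ∑ i, sf θ' i * (y i * ⟪a i, θ'⟫) := by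
      simp only [hw]
      rw [real_inner_smul_right, inner_sum]
      congr 1
      refine Finset.sum_congr rfl fun i _ => ?_
      rw [real_inner_smul_right, real_inner_comm]; ring
    rw [hinner]
    have hkey := lrgd_key_ineq hn (fun i => y i * ⟪a i, θ'⟫) j hj
    have hkey' : ∑ i, sf θ' i * (y i * ⟪a i, θ'⟫) ≤ Sf θ' * L := by
      rw [hSf, hsf]; exact hkey
    calc (Sf θ')⁻¹ * ∑ i, sf θ' i * (y i * ⟪a i, θ'⟫) ≤ (Sf θ')⁻¹ * (Sf θ' * L) :=
          mul_le_mul_of_nonneg_left hkey' (inv_pos.2 hS).le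
      _ = L := by rw [inv_mul_cancel_left₀ hS.ne']
  -- main induction
  have hmain : ∀ t : ℕ, (∀ k, k < t → ∃ i, y i * ⟪a i, θ k⟫ ≤ 0) →
      (t : ℝ) * (γ * μ) ≤ ⟪θ t, θstar⟫ ∧
        ‖θ t‖ ^ 2 ≤ (t : ℝ) * (2 * γ * L + γ ^ 2 * R ^ 2) := by
    intro t
    induction t with
    | zero =>
        intro _
        rw [h0]
        constructor
        · rw [Nat.cast_zero, zero_mul, inner_zero_left]
        · rw [Nat.cast_zero, zero_mul, norm_zero]; norm_num
    | succ t ih =>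
        intro hall
        obtain ⟨ih1, ih2⟩ := ih (fun k hk => hall k (hk.trans (Nat.lt_succ_self t)))
        have hmis := hall t (Nat.lt_succ_self t)
        have hwB := hB (θ t)
        have hwC := hC (θ t) hmis
        have hwA := hA (θ t)
        rw [hstep' t]
        constructor
        · rw [inner_add_left, real_inner_smul_left]
          push_cast
          nlinarith [hγ.le]
        · have hexp : ‖θ t + γ • w (θ t)‖ ^ 2
              = ‖θ t‖ ^ 2 + 2 * ⟪θ t, γ • w (θ t)⟫ + ‖γ • w (θ t)‖ ^ 2 := by
            rw [← real_inner_self_eq_norm_sq, ← real_inner_self_eq_norm_sq,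
              ← real_inner_self_eq_norm_sq, inner_add_add_self,
              real_inner_comm (γ • w (θ t)) (θ t)]
            ring
          rw [hexp, real_inner_smul_right, norm_smul, Real.norm_eq_abs,
            abs_of_pos hγ, mul_pow]
          have hwn : ‖w (θ t)‖ ^ 2 ≤ R ^ 2 := by
            nlinarith [norm_nonneg (w (θ t))]
          push_cast
          nlinarith [hγ.le]
  -- conclusion
  by_contra hcon
  push_neg at hcon
  set T : ℝ := R ^ 2 / μ ^ 2 + 2 * L / (γ * μ ^ 2) with hT
  have hT0 : 0 ≤ T := by
    have h1 : 0 ≤ R ^ 2 / μ ^ 2 := by positivity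
    have h2 : 0 ≤ 2 * L / (γ * μ ^ 2) := by positivity
    exact add_nonneg h1 h2
  set N : ℕ := ⌊T⌋₊ + 1 with hN
  have hNT : T < (N : ℝ) := by
    rw [hN]
    push_cast
    exact Nat.lt_floor_add_one T
  have hprev : ∀ k, k < N → ∃ i, y i * ⟪a i, θ k⟫ ≤ 0 := by
    intro k hk
    have hk' : (k : ℝ) ≤ T := by
      have : k ≤ ⌊T⌋₊ := Nat.lt_succ_iff.mp hk
      calc (k:ℝ) ≤ (⌊T⌋₊ : ℝ) := by exact_mod_cast this
        _ ≤ T := Nat.floor_le hT0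
    obtain ⟨i, hi⟩ := hcon k hk'
    exact ⟨i, hi⟩
  obtain ⟨h1, h2⟩ := hmain N hprev
  have hCS : ⟪θ N, θstar⟫ ≤ ‖θ N‖ := by
    calc ⟪θ N, θstar⟫ ≤ ‖θ N‖ * ‖θstar‖ := real_inner_le_norm _ _
      _ = ‖θ N‖ := by rw [hstar, mul_one]
  have hN1 : (1:ℝ) ≤ (N:ℝ) := by
    have : 1 ≤ N := Nat.le_add_left 1 _
    exact_mod_cast this
  have hsq : ((N:ℝ) * (γ * μ)) ^ 2 ≤ (N:ℝ) * (2 * γ * L + γ ^ 2 * R ^ 2) := by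
    have h3 : (N:ℝ) * (γ * μ) ≤ ‖θ N‖ := le_trans h1 hCS
    have h4 : 0 ≤ (N:ℝ) * (γ * μ) := by positivity
    calc ((N:ℝ) * (γ * μ)) ^ 2 ≤ ‖θ N‖ ^ 2 := pow_le_pow_left₀ h4 h3 2
      _ ≤ (N:ℝ) * (2 * γ * L + γ ^ 2 * R ^ 2) := h2
  have hNpos : (0:ℝ) < (N:ℝ) := by linarith
  have hNle : (N:ℝ) * (γ ^ 2 * μ ^ 2) ≤ 2 * γ * L + γ ^ 2 * R ^ 2 := by
    have h6 : (N:ℝ) * ((N:ℝ) * (γ ^ 2 * μ ^ 2)) ≤ (N:ℝ) * (2 * γ * L + γ ^ 2 * R ^ 2) := by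
      calc (N:ℝ) * ((N:ℝ) * (γ ^ 2 * μ ^ 2)) = ((N:ℝ) * (γ * μ)) ^ 2 := by ring
        _ ≤ (N:ℝ) * (2 * γ * L + γ ^ 2 * R ^ 2) := hsq
    exact le_of_mul_le_mul_left h6 hNpos
  have hTmul : T * (γ ^ 2 * μ ^ 2) = 2 * γ * L + γ ^ 2 * R ^ 2 := by
    rw [hT]; field_simp; ring
  have : (N:ℝ) ≤ T := by
    have hpos : (0:ℝ) < γ ^ 2 * μ ^ 2 := by positivity
    have := hNle.trans_eq hTmul.symm
    exact le_of_mul_le_mul_right this hpos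
  exact absurd hNT (not_lt.2 this)
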